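/- Let V be an n×n complex matrix with Vᴴ = V and V² = I (a Hermitian involution), let H be an arbitrary n×n complex matrix, and define U(t) := exp(−i(t/2)V) ∈ M_n(ℂ). Then the commutator satisfies [V, H] = i·( U(π/2)·H·U(−π/2) − U(−π/2)·H·U(π/2) ). -/

import Mathlib

open Matrix Real
open scoped Nat

lemma exp_idem {n : ℕ} (P : Matrix (Fin n) (Fin n) ℂ) (hP : P * P = P) (c : ℂ) :
    NormedSpace.exp (c • P) = 1 + (Complex.exp c - 1) • P := by
  letI : SeminormedRing (Matrix (Fin n) (Fin n) ℂ) := Matrix.linftyOpSemiNormedRing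
  letI : NormedRing (Matrix (Fin n) (Fin n) ℂ) := Matrix.linftyOpNormedRing
  letI : NormedAlgebra ℂ (Matrix (Fin n) (Fin n) ℂ) := Matrix.linftyOpNormedAlgebra
  have hpow : ∀ k : ℕ, P ^ (k + 1) = P := by
    intro k
    induction k with
    | zero => simp
    | succ m ih => rw [pow_succ, ih, hP]
  have hsum : Summable fun k : ℕ => ((k ! : ℂ)⁻¹) • (c • P) ^ k :=
    NormedSpace.expSeries_summable' (𝕂 := ℂ) (c • P)
  have hsumc : Summable fun k : ℕ => ((k ! : ℂ)⁻¹) • c ^ k :=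
    NormedSpace.expSeries_summable' (𝕂 := ℂ) c
  have hsumc' : Summable fun k : ℕ => (((k + 1) ! : ℂ)⁻¹) * c ^ (k + 1) := by
    have := (summable_nat_add_iff 1).mpr hsumc
    simpa [smul_eq_mul] using this
  have hscal : ∑' k : ℕ, (((k + 1) ! : ℂ)⁻¹) * c ^ (k + 1) = Complex.exp c - 1 := by
    have h := Summable.tsum_eq_zero_add hsumc
    have hexp : Complex.exp c = ∑' k : ℕ, ((k ! : ℂ)⁻¹) • c ^ k := by
      rw [Complex.exp_eq_exp_ℂ, NormedSpace.exp_eq_tsum ℂ]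
    rw [hexp, h]
    simp [smul_eq_mul]
  rw [NormedSpace.exp_eq_tsum ℂ]
  beta_reduce
  rw [Summable.tsum_eq_zero_add hsum]
  have h1 : ∀ k : ℕ, ((((k : ℕ) + 1) ! : ℂ)⁻¹) • (c • P) ^ (k + 1)
      = ((((k + 1) ! : ℂ)⁻¹) * c ^ (k + 1)) • P := by
    intro k
    rw [smul_pow, hpow, smul_smul]
  simp only [h1]
  rw [Summable.tsum_smul_const hsumc', hscal]
  simp

lemma exp_invol {n : ℕ} (V : Matrix (Fin n) (Fin n) ℂ) (hV : V * V = 1) (c : ℂ) :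
    NormedSpace.exp (c • V)
      = ((Complex.exp c + Complex.exp (-c)) / 2) • 1
        + ((Complex.exp c - Complex.exp (-c)) / 2) • V := by
  set P : Matrix (Fin n) (Fin n) ℂ := (2⁻¹ : ℂ) • (1 + V) with hPdef
  set Q : Matrix (Fin n) (Fin n) ℂ := (2⁻¹ : ℂ) • (1 - V) with hQdef
  have hP : P * P = P := by
    rw [hPdef]
    rw [smul_mul_assoc, mul_smul_comm, smul_smul]
    rw [add_mul, mul_add, mul_add, hV]
    simp only [Matrix.one_mul, Matrix.mul_one]
    module
  have hQ : Q * Q = Q := by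
    rw [hQdef]
    rw [smul_mul_assoc, mul_smul_comm, smul_smul]
    rw [sub_mul, mul_sub, mul_sub, hV]
    simp only [Matrix.one_mul, Matrix.mul_one]
    module
  have hQP : Q = 1 - P := by rw [hPdef, hQdef]; module
  have hdecomp : c • V = c • P + (-c) • Q := by rw [hPdef, hQdef]; module
  have hcomm : Commute (c • P) ((-c) • Q) := by
    have : Commute P Q := by
      rw [hQP]
      exact (Commute.one_right P).sub_right (Commute.refl P)
    exact (this.smul_left c).smul_right (-c)
  rw [hdecomp, Matrix.exp_add_of_commute _ _ hcomm, exp_idem P hP, exp_idem Q hQ]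
  have hPQ : P * Q = 0 := by
    rw [hPdef, hQdef]
    rw [smul_mul_assoc, mul_smul_comm, smul_smul]
    rw [add_mul, mul_sub, mul_sub, hV]
    simp only [Matrix.one_mul, Matrix.mul_one]
    module
  have expand2 : (1 + (Complex.exp c - 1) • P) * (1 + (Complex.exp (-c) - 1) • Q)
      = 1 + (Complex.exp c - 1) • P + (Complex.exp (-c) - 1) • Q
        + ((Complex.exp c - 1) * (Complex.exp (-c) - 1)) • (P * Q) := by
    simp only [mul_add, add_mul, Matrix.one_mul, Matrix.mul_one,
      smul_mul_assoc, mul_smul_comm, smul_smul]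
    module
  rw [expand2, hPQ, smul_zero, add_zero, hPdef, hQdef]
  simp only [smul_smul, smul_add, smul_sub]
  module

theorem stmt0 (n : ℕ) (V H : Matrix (Fin n) (Fin n) ℂ)
    (hVherm : Vᴴ = V) (hVinv : V * V = 1)
    (U : ℝ → Matrix (Fin n) (Fin n) ℂ)
    (hU : ∀ t : ℝ, U t = NormedSpace.exp ((-Complex.I * ((t : ℂ) / 2)) • V)) :
    V * H - H * V =
      Complex.I •
        (U (π / 2) * H * U (-(π / 2)) - U (-(π / 2)) * H * U (π / 2)) := by
  set c : ℂ := -Complex.I * (((π / 2 : ℝ) : ℂ) / 2) with hc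
  set a : ℂ := (Complex.exp c + Complex.exp (-c)) / 2 with ha
  set b : ℂ := (Complex.exp c - Complex.exp (-c)) / 2 with hb
  have hU1 : U (π / 2) = a • 1 + b • V := by
    rw [hU, exp_invol V hVinv]
  have hU2 : U (-(π / 2)) = a • 1 + (-b) • V := by
    have h : (-Complex.I * (((-(π / 2) : ℝ) : ℂ) / 2)) = -c := by
      rw [hc]; push_cast; ring
    rw [hU, h, exp_invol V hVinv, neg_neg, ha, hb]
    module
  have hexp2c : Complex.exp (2 * c) = -Complex.I := by
    have h : 2 * c = ((-(π / 2) : ℝ) : ℂ) * Complex.I := by rw [hc]; push_cast; ring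
    rw [h, Complex.exp_mul_I, ← Complex.ofReal_cos, ← Complex.ofReal_sin]
    simp [Real.cos_pi_div_two, Real.sin_pi_div_two]
  have hexpn2c : Complex.exp (-(2 * c)) = Complex.I := by
    have h : -(2 * c) = ((π / 2 : ℝ) : ℂ) * Complex.I := by rw [hc]; push_cast; ring
    rw [h, Complex.exp_mul_I, ← Complex.ofReal_cos, ← Complex.ofReal_sin]
    simp [Real.cos_pi_div_two, Real.sin_pi_div_two]
  have key : Complex.I * (2 * (a * b)) = 1 := by
    have h1 : Complex.exp c * Complex.exp c = -Complex.I := by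
      rw [← Complex.exp_add, ← hexp2c]; ring_nf
    have h2 : Complex.exp (-c) * Complex.exp (-c) = Complex.I := by
      rw [← Complex.exp_add, ← hexpn2c]; ring_nf
    rw [ha, hb]
    linear_combination (Complex.I / 2) * h1 - (Complex.I / 2) * h2 - Complex.I_sq
  rw [hU1, hU2]
  have expand : (a • 1 + b • V) * H * (a • 1 + (-b) • V)
      - (a • 1 + (-b) • V) * H * (a • 1 + b • V)
      = (2 * (a * b)) • (V * H - H * V) := by
    simp only [add_mul, mul_add, smul_mul_assoc, mul_smul_comm, smul_smul,
      Matrix.one_mul, Matrix.mul_one, smul_add, smul_sub]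
    module
  rw [expand, smul_smul, key, one_smul]
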